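/- For every odd integer n ≥ 5, the placement of 9 queens on the n×n board at the squares (1,1), (1,n), (n,1), (n,n), (1,(n+1)/2), ((n+1)/2,1), (n,(n+1)/2), ((n+1)/2,n), and ((n+1)/2,(n+1)/2) attacks at most 10n squares in total. -/

import Mathlib

/-- The n×n board: squares (x,y) ∈ ℤ×ℤ with 1 ≤ x ≤ n and 1 ≤ y ≤ n. -/
noncomputable def board (n : ℕ) : Finset (ℤ × ℤ) := Finset.Icc 1 (n : ℤ) ×ˢ Finset.Icc 1 (n : ℤ)

/-- A line of the board: a row (fixed y), a column (fixed x), a positive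
diagonal (fixed x − y), or a negative diagonal (fixed x + y). -/
inductive Line : Type where
  | row : ℤ → Line
  | col : ℤ → Line
  | posDiag : ℤ → Line
  | negDiag : ℤ → Line
deriving DecidableEq

/-- The defining condition for a point to be on a given line. -/
def Line.pred : Line → ℤ × ℤ → Prop
  | .row b, p => p.2 = b
  | .col a, p => p.1 = a
  | .posDiag d, p => p.1 - p.2 = d
  | .negDiag s, p => p.1 + p.2 = s

instance (L : Line) (p : ℤ × ℤ) : Decidable (L.pred p) :=
  match L with
  | .row b => inferInstanceAs (Decidable (p.2 = b))
  | .col a => inferInstanceAs (Decidable (p.1 = a))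
  | .posDiag d => inferInstanceAs (Decidable (p.1 - p.2 = d))
  | .negDiag s => inferInstanceAs (Decidable (p.1 + p.2 = s))

/-- The set of squares of the n×n board lying on a line. -/
noncomputable def Line.squares (n : ℕ) (L : Line) : Finset (ℤ × ℤ) := (board n).filter L.pred

/-- The length of a line: its number of board squares. -/
noncomputable def Line.length (n : ℕ) (L : Line) : ℕ := (L.squares n).card

/-- Whether a line is a diagonal (of either orientation). -/
def Line.isDiag : Line → Prop
  | .posDiag _ => True
  | .negDiag _ => True
  | _ => False

/-- The set of board squares attacked by a placement S of queens: squares q on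
the board such that some queen p ∈ S with p ≠ q shares a row, column, or
diagonal with q. -/
noncomputable def attacked (n : ℕ) (S : Finset (ℤ × ℤ)) : Finset (ℤ × ℤ) :=
  S.biUnion fun p => (board n).filter fun q =>
    q ≠ p ∧ (p.1 = q.1 ∨ p.2 = q.2 ∨ p.1 - p.2 = q.1 - q.2 ∨ p.1 + p.2 = q.1 + q.2)

/-- G(m) = ⌊m²/12⌋ + 1 if m ≡ 3, 6, 9 (mod 12) or m = 10; ⌊m²/12⌋ otherwise. -/
def G (m : ℕ) : ℕ :=
  if m % 12 = 3 ∨ m % 12 = 6 ∨ m % 12 = 9 ∨ m = 10 then m ^ 2 / 12 + 1 else m ^ 2 / 12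

lemma nq_card_filter_le_of_fst (n : ℕ) (P : ℤ × ℤ → Prop) [DecidablePred P] (a b : ℤ)
    (hab : ∀ q ∈ (board n).filter P, q.1 ∈ Finset.Icc a b)
    (hinj : ∀ q ∈ (board n).filter P, ∀ q' ∈ (board n).filter P, q.1 = q'.1 → q = q') :
    ((board n).filter P).card ≤ (b + 1 - a).toNat := by
  have h := Finset.card_le_card_of_injOn (f := Prod.fst) hab
    (fun q hq q' hq' h => hinj q hq q' hq' h)
  rwa [Int.card_Icc] at h

lemma nq_sub_lemma (n : ℕ) (m : ℤ) (hm : 2 * m = (n : ℤ) + 1) (hn5 : (5 : ℤ) ≤ (n : ℤ)) :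
    attacked n ({((1 : ℤ), (1 : ℤ)), (1, (n : ℤ)), ((n : ℤ), 1), ((n : ℤ), (n : ℤ)),
        (1, m), (m, 1), ((n : ℤ), m), (m, (n : ℤ)), (m, m)} : Finset (ℤ × ℤ))
      ⊆ (({1, m, (n : ℤ)} : Finset ℤ) ×ˢ Finset.Icc (1 : ℤ) n)
        ∪ (Finset.Icc (1 : ℤ) n ×ˢ ({1, m, (n : ℤ)} : Finset ℤ))
        ∪ (board n).filter (fun q => q.1 - q.2 = 0)
        ∪ (board n).filter (fun q => q.1 - q.2 = m - 1)
        ∪ (board n).filter (fun q => q.1 - q.2 = 1 - m)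
        ∪ (board n).filter (fun q => q.1 + q.2 = (n : ℤ) + 1)
        ∪ (board n).filter (fun q => q.1 + q.2 = m + 1)
        ∪ (board n).filter (fun q => q.1 + q.2 = (n : ℤ) + m) := by
  intro q hq
  simp only [attacked, Finset.mem_biUnion, Finset.mem_filter] at hq
  obtain ⟨p, hp, hqb, _, hcond⟩ := hq
  have hb : 1 ≤ q.1 ∧ q.1 ≤ (n : ℤ) ∧ 1 ≤ q.2 ∧ q.2 ≤ (n : ℤ) := by
    simpa [board, Finset.mem_product, Finset.mem_Icc, and_assoc] using hqb
  have hp' : (p.1 = 1 ∨ p.1 = m ∨ p.1 = (n : ℤ)) ∧ (p.2 = 1 ∨ p.2 = m ∨ p.2 = (n : ℤ)) := by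
    simp only [Finset.mem_insert, Finset.mem_singleton, Prod.ext_iff] at hp
    rcases hp with h|h|h|h|h|h|h|h|h <;> simp [h.1, h.2]
  simp only [Finset.mem_union, Finset.mem_filter, Finset.mem_product, Finset.mem_Icc,
    Finset.mem_insert, Finset.mem_singleton, board]
  omega

lemma nq_memb (n : ℕ) (P : ℤ × ℤ → Prop) [DecidablePred P] :
    ∀ q ∈ (board n).filter P,
      1 ≤ q.1 ∧ q.1 ≤ (n : ℤ) ∧ 1 ≤ q.2 ∧ q.2 ≤ (n : ℤ) ∧ P q := by
  intro q hq
  simp only [Finset.mem_filter, board, Finset.mem_product, Finset.mem_Icc] at hq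
  tauto

lemma nq_injd (n : ℕ) (c : ℤ) : ∀ q ∈ (board n).filter (fun q => q.1 - q.2 = c),
    ∀ q' ∈ (board n).filter (fun q => q.1 - q.2 = c), q.1 = q'.1 → q = q' := by
  intro q hq q' hq' h
  simp only [Finset.mem_filter] at hq hq'
  exact Prod.ext h (by omega)

lemma nq_inje (n : ℕ) (c : ℤ) : ∀ q ∈ (board n).filter (fun q => q.1 + q.2 = c),
    ∀ q' ∈ (board n).filter (fun q => q.1 + q.2 = c), q.1 = q'.1 → q = q' := by
  intro q hq q' hq' h
  simp only [Finset.mem_filter] at hq hq'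
  exact Prod.ext h (by omega)

lemma nq_XY_card (n : ℕ) (m : ℤ) (hm : 2 * m = (n : ℤ) + 1) (hn5 : (5 : ℤ) ≤ (n : ℤ)) :
    ((({1, m, (n : ℤ)} : Finset ℤ) ×ˢ Finset.Icc (1 : ℤ) n)
      ∪ (Finset.Icc (1 : ℤ) n ×ˢ ({1, m, (n : ℤ)} : Finset ℤ))).card + 9 = 6 * n := by
  have hIcc : (Finset.Icc (1 : ℤ) n).card = n := by rw [Int.card_Icc]; omega
  have hscard : ({1, m, (n : ℤ)} : Finset ℤ).card = 3 :=
    Finset.card_eq_three.mpr ⟨1, m, (n : ℤ), by omega, by omega, by omega, rfl⟩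
  have hinter : (({1, m, (n : ℤ)} : Finset ℤ) ×ˢ Finset.Icc (1 : ℤ) n)
      ∩ (Finset.Icc (1 : ℤ) n ×ˢ ({1, m, (n : ℤ)} : Finset ℤ))
      = ({1, m, (n : ℤ)} : Finset ℤ) ×ˢ ({1, m, (n : ℤ)} : Finset ℤ) := by
    ext ⟨x, y⟩
    simp only [Finset.mem_inter, Finset.mem_product, Finset.mem_Icc,
      Finset.mem_insert, Finset.mem_singleton]
    constructor
    · rintro ⟨⟨h1, _⟩, _, h2⟩; exact ⟨h1, h2⟩
    · rintro ⟨h1, h2⟩; refine ⟨⟨h1, ?_⟩, ?_, h2⟩ <;> omega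
  have h := Finset.card_union_add_card_inter
    ((({1, m, (n : ℤ)} : Finset ℤ) ×ˢ Finset.Icc (1 : ℤ) n))
    ((Finset.Icc (1 : ℤ) n ×ˢ ({1, m, (n : ℤ)} : Finset ℤ)))
  rw [hinter] at h
  rw [Finset.card_product, Finset.card_product, Finset.card_product, hscard, hIcc] at h
  omega


/-- For every odd n ≥ 5, the nine queens at the corners, the
middles of the sides, and the center of the n×n board attack at most 10·n
squares. -/
theorem nine_queens_attack_at_most_ten_n (n : ℕ) (hodd : Odd n) (hn : 5 ≤ n) :
    (attacked n ({((1 : ℤ), (1 : ℤ)), (1, (n : ℤ)), ((n : ℤ), 1), ((n : ℤ), (n : ℤ)),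
        (1, ((n : ℤ) + 1) / 2), (((n : ℤ) + 1) / 2, 1),
        ((n : ℤ), ((n : ℤ) + 1) / 2), (((n : ℤ) + 1) / 2, (n : ℤ)),
        (((n : ℤ) + 1) / 2, ((n : ℤ) + 1) / 2)} : Finset (ℤ × ℤ))).card
      ≤ 10 * n := by
  obtain ⟨k, hk⟩ := hodd
  set m : ℤ := ((n : ℤ) + 1) / 2 with hmdef
  have hm : 2 * m = (n : ℤ) + 1 := by subst hk; push_cast [hmdef]; omega
  have hn5 : (5 : ℤ) ≤ (n : ℤ) := by exact_mod_cast hn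
  set M : ℕ := (n + 1) / 2 with hMdef
  have hM : 2 * M = n + 1 := by omega
  have hD1 : ((board n).filter (fun q => q.1 - q.2 = 0)).card ≤ n := by
    have h := nq_card_filter_le_of_fst n _ 1 (n : ℤ)
      (fun q hq => by have := nq_memb n _ q hq; simp only [Finset.mem_Icc]; omega) (nq_injd n 0)
    refine h.trans (le_of_eq ?_); omega
  have hD2 : ((board n).filter (fun q => q.1 - q.2 = m - 1)).card ≤ M := by
    have h := nq_card_filter_le_of_fst n _ m (n : ℤ)
      (fun q hq => by have := nq_memb n _ q hq; simp only [Finset.mem_Icc]; omega)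
      (nq_injd n (m - 1))
    refine h.trans (le_of_eq ?_); omega
  have hD3 : ((board n).filter (fun q => q.1 - q.2 = 1 - m)).card ≤ M := by
    have h := nq_card_filter_le_of_fst n _ 1 m
      (fun q hq => by have := nq_memb n _ q hq; simp only [Finset.mem_Icc]; omega)
      (nq_injd n (1 - m))
    refine h.trans (le_of_eq ?_); omega
  have hE1 : ((board n).filter (fun q => q.1 + q.2 = (n : ℤ) + 1)).card ≤ n := by
    have h := nq_card_filter_le_of_fst n _ 1 (n : ℤ)
      (fun q hq => by have := nq_memb n _ q hq; simp only [Finset.mem_Icc]; omega)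
      (nq_inje n ((n : ℤ) + 1))
    refine h.trans (le_of_eq ?_); omega
  have hE2 : ((board n).filter (fun q => q.1 + q.2 = m + 1)).card ≤ M := by
    have h := nq_card_filter_le_of_fst n _ 1 m
      (fun q hq => by have := nq_memb n _ q hq; simp only [Finset.mem_Icc]; omega)
      (nq_inje n (m + 1))
    refine h.trans (le_of_eq ?_); omega
  have hE3 : ((board n).filter (fun q => q.1 + q.2 = (n : ℤ) + m)).card ≤ M := by
    have h := nq_card_filter_le_of_fst n _ m (n : ℤ)
      (fun q hq => by have := nq_memb n _ q hq; simp only [Finset.mem_Icc]; omega)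
      (nq_inje n ((n : ℤ) + m))
    refine h.trans (le_of_eq ?_); omega
  have hXY := nq_XY_card n m hm hn5
  have hsub := nq_sub_lemma n m hm hn5
  have hcard := Finset.card_le_card hsub
  set A := (({1, m, (n : ℤ)} : Finset ℤ) ×ˢ Finset.Icc (1 : ℤ) n)
        ∪ (Finset.Icc (1 : ℤ) n ×ˢ ({1, m, (n : ℤ)} : Finset ℤ)) with hA
  set B1 := (board n).filter (fun q => q.1 - q.2 = 0) with hB1
  set B2 := (board n).filter (fun q => q.1 - q.2 = m - 1) with hB2
  set B3 := (board n).filter (fun q => q.1 - q.2 = 1 - m) with hB3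
  set C1 := (board n).filter (fun q => q.1 + q.2 = (n : ℤ) + 1) with hC1
  set C2 := (board n).filter (fun q => q.1 + q.2 = m + 1) with hC2
  set C3 := (board n).filter (fun q => q.1 + q.2 = (n : ℤ) + m) with hC3
  have key : (A ∪ B1 ∪ B2 ∪ B3 ∪ C1 ∪ C2 ∪ C3).card ≤
      A.card + B1.card + B2.card + B3.card + C1.card + C2.card + C3.card :=
    calc (A ∪ B1 ∪ B2 ∪ B3 ∪ C1 ∪ C2 ∪ C3).card
        ≤ (A ∪ B1 ∪ B2 ∪ B3 ∪ C1 ∪ C2).card + C3.card := Finset.card_union_le _ _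
      _ ≤ (A ∪ B1 ∪ B2 ∪ B3 ∪ C1).card + C2.card + C3.card :=
          Nat.add_le_add_right (Finset.card_union_le _ _) _
      _ ≤ (A ∪ B1 ∪ B2 ∪ B3).card + C1.card + C2.card + C3.card :=
          Nat.add_le_add_right (Nat.add_le_add_right (Finset.card_union_le _ _) _) _
      _ ≤ (A ∪ B1 ∪ B2).card + B3.card + C1.card + C2.card + C3.card :=
          Nat.add_le_add_right (Nat.add_le_add_right (Nat.add_le_add_right
            (Finset.card_union_le _ _) _) _) _
      _ ≤ (A ∪ B1).card + B2.card + B3.card + C1.card + C2.card + C3.card :=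
          Nat.add_le_add_right (Nat.add_le_add_right (Nat.add_le_add_right
            (Nat.add_le_add_right (Finset.card_union_le _ _) _) _) _) _
      _ ≤ A.card + B1.card + B2.card + B3.card + C1.card + C2.card + C3.card :=
          Nat.add_le_add_right (Nat.add_le_add_right (Nat.add_le_add_right
            (Nat.add_le_add_right (Nat.add_le_add_right (Finset.card_union_le _ _) _) _) _) _) _
  have := hcard.trans key
  omega
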